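/- If c ∈ R^n can be written as c = Σ_S λ_S 1_S, a convex combination over d-subsets S with Δ_S > 0 (λ_S ≥ 0, Σ λ_S = 1), then for all t ∈ R^n, log det(Σ_i e^{t_i} x_i ⊗ x_i) ≥ ⟨c,t⟩ − Σ_S λ_S log(λ_S/Δ_S); hence Φ*(c) ≤ Σ_S λ_S log(λ_S/Δ_S) < ∞. -/

import Mathlib

open Matrix

section helpers
open Matrix Finset


variable {d n : ℕ}

private lemma prod_orderEmbOfFin' {M : Type*} [CommMonoid M] (S : Finset (Fin n))
    (h : S.card = d) (g : Fin n → M) :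
    ∏ a : Fin d, g (S.orderEmbOfFin h a) = ∏ i ∈ S, g i := by
  refine Finset.prod_nbij (fun a => S.orderEmbOfFin h a) (fun a _ => S.orderEmbOfFin_mem h a)
    (fun a _ b _ hab => (S.orderEmbOfFin h).injective hab) ?_ (fun _ _ => rfl)
  intro i hi
  have : i ∈ Set.range (S.orderEmbOfFin h) := by rw [S.range_orderEmbOfFin h]; exact hi
  obtain ⟨a, ha⟩ := this
  exact ⟨a, by simp, ha⟩

private lemma sum_orderEmbOfFin' {M : Type*} [AddCommMonoid M] (S : Finset (Fin n))
    (h : S.card = d) (g : Fin n → M) :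
    ∑ a : Fin d, g (S.orderEmbOfFin h a) = ∑ i ∈ S, g i := by
  refine Finset.sum_nbij (fun a => S.orderEmbOfFin h a) (fun a _ => S.orderEmbOfFin_mem h a)
    (fun a _ b _ hab => (S.orderEmbOfFin h).injective hab) ?_ (fun _ _ => rfl)
  intro i hi
  have : i ∈ Set.range (S.orderEmbOfFin h) := by rw [S.range_orderEmbOfFin h]; exact hi
  obtain ⟨a, ha⟩ := this
  exact ⟨a, by simp, ha⟩

private lemma gram_sq (x : Fin n → Fin d → ℝ) (S : Finset (Fin n)) (h : S.card = d) :
    (∑ i ∈ S, Matrix.vecMulVec (x i) (x i)).det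
      = (Matrix.of fun a b : Fin d => x (S.orderEmbOfFin h a) b).det ^ 2 := by
  set M : Matrix (Fin d) (Fin d) ℝ := Matrix.of fun a b : Fin d => x (S.orderEmbOfFin h a) b
  have hM : (∑ i ∈ S, Matrix.vecMulVec (x i) (x i)) = Mᵀ * M := by
    ext a b
    have : ∀ i, (Matrix.vecMulVec (x i) (x i)) a b = x i a * x i b := fun i => rfl
    rw [Matrix.sum_apply, Matrix.mul_apply]
    simp only [this, Matrix.transpose_apply]
    rw [← sum_orderEmbOfFin' S h (fun i => x i a * x i b)]
    rfl
  rw [hM, Matrix.det_mul, Matrix.det_transpose, sq]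

private lemma cb (w : Fin n → ℝ) (x : Fin n → Fin d → ℝ) :
    (∑ i, w i • Matrix.vecMulVec (x i) (x i)).det
      = ∑ S ∈ Finset.univ.powersetCard d,
          (∏ i ∈ S, w i) * (∑ i ∈ S, Matrix.vecMulVec (x i) (x i)).det := by
  classical
  have hrows : (∑ i, w i • Matrix.vecMulVec (x i) (x i))
      = Matrix.of fun a : Fin d => ∑ i, (w i * x i a) • x i := by
    ext a b
    rw [Matrix.sum_apply]
    simp [Matrix.vecMulVec_apply, Finset.sum_apply, mul_assoc]
  rw [hrows]
  have hdet : (Matrix.of fun a : Fin d => ∑ i, (w i * x i a) • x i).det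
      = Matrix.detRowAlternating (fun a : Fin d => ∑ i, (w i * x i a) • x i) := rfl
  rw [hdet]
  have expand := (Matrix.detRowAlternating (R := ℝ) (n := Fin d)).toMultilinearMap.map_sum
    (g := fun (a : Fin d) (i : Fin n) => (w i * x i a) • x i)
  rw [show ⇑(Matrix.detRowAlternating (R := ℝ) (n := Fin d)).toMultilinearMap
      = ⇑(Matrix.detRowAlternating (R := ℝ) (n := Fin d)) from rfl] at expand
  rw [expand]
  -- each term: pull out scalars
  have hterm : ∀ f : Fin d → Fin n,
      Matrix.detRowAlternating (fun a : Fin d => (w (f a) * x (f a) a) • x (f a))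
        = (∏ a, w (f a) * x (f a) a) * (Matrix.of fun a : Fin d => x (f a)).det := by
    intro f
    have h1 := (Matrix.detRowAlternating (R := ℝ) (n := Fin d)).toMultilinearMap.map_smul_univ
      (fun a => w (f a) * x (f a) a) (fun a => x (f a))
    rw [show ⇑(Matrix.detRowAlternating (R := ℝ) (n := Fin d)).toMultilinearMap
      = ⇑(Matrix.detRowAlternating (R := ℝ) (n := Fin d)) from rfl] at h1
    rw [h1, smul_eq_mul]
    rfl
  simp only [hterm]
  -- kill non-injective
  rw [← Finset.sum_filter_of_ne (p := fun f : Fin d → Fin n => Function.Injective f)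
    (by
      intro f _ hne
      by_contra hinj
      obtain ⟨a, b, hab, hne'⟩ := Function.not_injective_iff.mp hinj
      have : (Matrix.of fun a : Fin d => x (f a)).det = 0 :=
        Matrix.det_zero_of_row_eq hne' (by show x (f a) = x (f b); rw [hab])
      exact hne (by rw [this, mul_zero]))]
  -- fiberwise group by image
  rw [← Finset.sum_fiberwise_of_maps_to (g := fun f : Fin d → Fin n => Finset.image f Finset.univ)
    (t := Finset.univ.powersetCard d)
    (fun f hf => by
      rw [Finset.mem_powersetCard_univ]
      rw [Finset.card_image_of_injective _ (Finset.mem_filter.mp hf).2]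
      simp)]
  refine Finset.sum_congr rfl ?_
  intro S hS
  have hcard : S.card = d := Finset.mem_powersetCard_univ.mp hS
  set e : Fin d → Fin n := fun a => S.orderEmbOfFin hcard a with he
  have heinj : Function.Injective e := (S.orderEmbOfFin hcard).injective
  have himg : Finset.image e Finset.univ = S := by
    apply Finset.coe_injective
    rw [Finset.coe_image, Finset.coe_univ, Set.image_univ]
    exact S.range_orderEmbOfFin hcard
  -- inner sum over fiber = sum over permutations
  rw [show (∑ f ∈ Finset.filter
        (fun f => Finset.image f Finset.univ = S)
        (Finset.filter (fun f : Fin d → Fin n => Function.Injective f) Finset.univ),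
      (∏ a, w (f a) * x (f a) a) * (Matrix.of fun a : Fin d => x (f a)).det)
      = ∑ σ : Equiv.Perm (Fin d),
        (∏ a, w (e (σ a)) * x (e (σ a)) a) * (Matrix.of fun a : Fin d => x (e (σ a))).det from by
    refine (Finset.sum_bij (fun (σ : Equiv.Perm (Fin d)) _ => fun a => e (σ a)) ?_ ?_ ?_ ?_).symm
    · intro σ _
      refine Finset.mem_filter.mpr ⟨Finset.mem_filter.mpr ⟨Finset.mem_univ _,
        heinj.comp σ.injective⟩, ?_⟩
      apply Finset.coe_injective
      rw [Finset.coe_image, Finset.coe_univ, Set.image_univ]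
      rw [show Set.range (fun a => e (σ a)) = Set.range e from σ.surjective.range_comp e]
      exact S.range_orderEmbOfFin hcard
    · intro σ₁ _ σ₂ _ hcomp
      exact Equiv.ext fun a => heinj (congrFun hcomp a)
    · intro f hf
      obtain ⟨hfinj, hfimg⟩ := Finset.mem_filter.mp hf
      have hfinj' : Function.Injective f := (Finset.mem_filter.mp hfinj).2
      have hmem : ∀ a, f a ∈ S := by
        intro a
        rw [← hfimg]
        exact Finset.mem_image_of_mem f (Finset.mem_univ a)
      set g : Fin d → Fin d := fun a => (S.orderIsoOfFin hcard).symm ⟨f a, hmem a⟩ with hg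
      have hginj : Function.Injective g := by
        intro a b hab
        apply hfinj'
        have := (S.orderIsoOfFin hcard).symm.injective.eq_iff.mp hab
        exact congrArg Subtype.val this
      refine ⟨Equiv.ofBijective g (Finite.injective_iff_bijective.mp hginj), Finset.mem_univ _, ?_⟩
      funext a
      show e (g a) = f a
      have : e (g a) = ((S.orderIsoOfFin hcard) (g a) : Fin n) :=
        (S.coe_orderIsoOfFin_apply hcard (g a)).symm
      rw [this, hg]
      simp
    · intro σ _
      rfl]
  -- now compute the permutation sum
  have hw : ∀ σ : Equiv.Perm (Fin d), (∏ a, w (e (σ a))) = ∏ i ∈ S, w i := by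
    intro σ
    rw [Equiv.prod_comp σ (fun a => w (e a))]
    exact prod_orderEmbOfFin' S hcard w
  have hperm : ∀ σ : Equiv.Perm (Fin d),
      (Matrix.of fun a : Fin d => x (e (σ a))).det
        = (Equiv.Perm.sign σ : ℝ) * (Matrix.of fun a : Fin d => x (e a)).det := by
    intro σ
    rw [show (Matrix.of fun a : Fin d => x (e (σ a)))
      = (Matrix.of fun a : Fin d => x (e a)).submatrix σ id from rfl]
    rw [Matrix.det_permute]
  calc ∑ σ : Equiv.Perm (Fin d),
        (∏ a, w (e (σ a)) * x (e (σ a)) a) * (Matrix.of fun a : Fin d => x (e (σ a))).det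
      = ∑ σ : Equiv.Perm (Fin d), (∏ i ∈ S, w i) * (Matrix.of fun a : Fin d => x (e a)).det *
          ((Equiv.Perm.sign σ : ℝ) * ∏ a, x (e (σ a)) a) := by
        refine Finset.sum_congr rfl fun σ _ => ?_
        rw [Finset.prod_mul_distrib, hw σ, hperm σ]
        ring
    _ = (∏ i ∈ S, w i) * (Matrix.of fun a : Fin d => x (e a)).det *
          (Matrix.of fun a b : Fin d => x (e a) b).det := by
        rw [← Finset.mul_sum]
        congr 1
        rw [Matrix.det_apply']
        rfl
    _ = (∏ i ∈ S, w i) * (∑ i ∈ S, Matrix.vecMulVec (x i) (x i)).det := by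
        rw [gram_sq x S hcard, sq]
        rw [show (Matrix.of fun a b : Fin d => x (S.orderEmbOfFin hcard a) b)
          = (Matrix.of fun a : Fin d => x (e a)) from rfl]
        ring

end helpers

/-- If `c = ∑_S λ_S 1_S` is a convex combination over `d`-subsets `S` with `Δ_S > 0`,
then for all `t`, `log det (∑ i, e^{t i} • x i ⊗ x i) ≥ ⟨c, t⟩ - ∑_S λ_S log (λ_S / Δ_S)`;
hence `Φ*(c)` is bounded by the entropy sum (terms with `λ_S = 0` are omitted). -/
theorem stmt8 {d n : ℕ} (x : Fin n → Fin d → ℝ)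
    (hspan : Submodule.span ℝ (Set.range x) = ⊤)
    (lam : Finset (Fin n) → ℝ) (c : Fin n → ℝ)
    (hlam0 : ∀ S, 0 ≤ lam S)
    (hsupp : ∀ S, lam S ≠ 0 →
      S.card = d ∧ 0 < (∑ i ∈ S, Matrix.vecMulVec (x i) (x i)).det)
    (hsum1 : ∑ S ∈ Finset.univ.powersetCard d, lam S = 1)
    (hc : ∀ i, c i =
      ∑ S ∈ Finset.filter (fun S => i ∈ S) (Finset.univ.powersetCard d), lam S) :
    ∀ t : Fin n → ℝ,
      (∑ i, c i * t i) -
          (∑ S ∈ Finset.filter (fun S => 0 < lam S) (Finset.univ.powersetCard d),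
            lam S * Real.log (lam S / (∑ i ∈ S, Matrix.vecMulVec (x i) (x i)).det))
        ≤ Real.log (∑ i, Real.exp (t i) • Matrix.vecMulVec (x i) (x i)).det := by
  classical
  intro t
  set Δ : Finset (Fin n) → ℝ := fun S => (∑ i ∈ S, Matrix.vecMulVec (x i) (x i)).det with hΔ
  set P : Finset (Finset (Fin n)) := Finset.univ.powersetCard d with hP
  set T : Finset (Finset (Fin n)) := P.filter (fun S => 0 < lam S) with hT
  set a : Finset (Fin n) → ℝ := fun S => Real.exp (∑ i ∈ S, t i) * Δ S with ha
  have hCB : (∑ i, Real.exp (t i) • Matrix.vecMulVec (x i) (x i)).det = ∑ S ∈ P, a S := by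
    rw [cb (fun i => Real.exp (t i)) x]
    refine Finset.sum_congr rfl fun S _ => ?_
    rw [← Real.exp_sum]
  have hΔnn : ∀ S ∈ P, 0 ≤ Δ S := fun S hS => by
    show 0 ≤ (∑ i ∈ S, Matrix.vecMulVec (x i) (x i)).det
    rw [gram_sq x S (Finset.mem_powersetCard_univ.mp hS)]
    positivity
  have hTsub : T ⊆ P := Finset.filter_subset _ _
  have hlampos : ∀ S ∈ T, 0 < lam S := fun S hS => (Finset.mem_filter.mp hS).2
  have hΔpos : ∀ S ∈ T, 0 < Δ S := fun S hS => (hsupp S (ne_of_gt (hlampos S hS))).2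
  have hapos : ∀ S ∈ T, 0 < a S := fun S hS =>
    mul_pos (Real.exp_pos _) (hΔpos S hS)
  have hsum1' : ∑ S ∈ T, lam S = 1 := by
    rw [hT, Finset.sum_filter_of_ne (fun S hS hne => lt_of_le_of_ne (hlam0 S) (Ne.symm hne))]
    exact hsum1
  have hTne : T.Nonempty := by
    by_contra hemp
    rw [Finset.not_nonempty_iff_eq_empty.mp hemp, Finset.sum_empty] at hsum1'
    norm_num at hsum1'
  -- AM-GM
  have hamgm := Real.geom_mean_le_arith_mean_weighted T lam (fun S => a S / lam S)
    (fun S _ => hlam0 S) hsum1'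
    (fun S hS => le_of_lt (div_pos (hapos S hS) (hlampos S hS)))
  have hsimp : ∑ S ∈ T, lam S * (a S / lam S) = ∑ S ∈ T, a S :=
    Finset.sum_congr rfl fun S hS => by
      rw [mul_comm, div_mul_cancel₀ _ (ne_of_gt (hlampos S hS))]
  rw [hsimp] at hamgm
  have hsumTpos : 0 < ∑ S ∈ T, a S := Finset.sum_pos hapos hTne
  have hsumle : ∑ S ∈ T, a S ≤ ∑ S ∈ P, a S := by
    refine Finset.sum_le_sum_of_subset_of_nonneg hTsub fun S hS _ => ?_
    exact mul_nonneg (Real.exp_pos _).le (hΔnn S hS)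
  have hlog1 : Real.log (∏ S ∈ T, (a S / lam S) ^ lam S)
      = ∑ S ∈ T, lam S * Real.log (a S / lam S) := by
    rw [Real.log_prod (s := T) (f := fun S => (a S / lam S) ^ lam S) (fun S hS => by
      exact ne_of_gt (Real.rpow_pos_of_pos (div_pos (hapos S hS) (hlampos S hS)) _))]
    exact Finset.sum_congr rfl fun S hS =>
      Real.log_rpow (div_pos (hapos S hS) (hlampos S hS)) _
  have hmain : ∑ S ∈ T, lam S * Real.log (a S / lam S)
      ≤ Real.log (∑ i, Real.exp (t i) • Matrix.vecMulVec (x i) (x i)).det := by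
    rw [← hlog1, hCB]
    have hprodpos : 0 < ∏ S ∈ T, (a S / lam S) ^ lam S :=
      Finset.prod_pos fun S hS =>
        Real.rpow_pos_of_pos (div_pos (hapos S hS) (hlampos S hS)) _
    exact Real.log_le_log hprodpos (le_trans hamgm hsumle)
  refine le_trans (le_of_eq ?_) hmain
  -- algebra: LHS = ∑ λ log(a/λ)
  have hct : ∑ i, c i * t i = ∑ S ∈ T, lam S * ∑ i ∈ S, t i := by
    have h1 : ∑ i, c i * t i = ∑ S ∈ P, lam S * ∑ i ∈ S, t i := by
      simp_rw [hc, Finset.sum_mul, Finset.sum_filter]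
      rw [Finset.sum_comm]
      refine Finset.sum_congr rfl fun S _ => ?_
      rw [Finset.mul_sum, ← Finset.sum_filter]
      refine Finset.sum_congr ?_ fun i _ => rfl
      simp [Finset.filter_mem_eq_inter]
    rw [h1, hT, Finset.sum_filter_of_ne]
    intro S _ hne
    refine lt_of_le_of_ne (hlam0 S) fun h0 => hne ?_
    rw [← h0, zero_mul]
  rw [hct, ← Finset.sum_sub_distrib]
  refine Finset.sum_congr rfl fun S hS => ?_
  have hl := hlampos S hS
  have hDp := hΔpos S hS
  show lam S * (∑ i ∈ S, t i) - lam S * Real.log (lam S / Δ S)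
      = lam S * Real.log (Real.exp (∑ i ∈ S, t i) * Δ S / lam S)
  rw [Real.log_div (ne_of_gt (mul_pos (Real.exp_pos _) hDp)) (ne_of_gt hl),
    Real.log_mul (ne_of_gt (Real.exp_pos _)) (ne_of_gt hDp), Real.log_exp,
    Real.log_div (ne_of_gt hl) (ne_of_gt hDp)]
  ring
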